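/- arXiv:2003.01819 — 2 statements merged into one kernel-verified Lean document; each statement's English description precedes it below -/
import Mathlib

section
/- Let p be an odd prime. The holomorph Hol(D_{2p²}) of the dihedral group of order 2p² has a unique (hence normal) Sylow p-subgroup, which has order p⁵. -/
open Equiv

/-- The left regular representation of a group `N` in `Equiv.Perm N`. -/
def leftReg (N : Type*) [Group N] : N →* Equiv.Perm N :=
  MulAction.toPermHom N N

/-- The holomorph of `N`: the normalizer of the image of the left regular
representation inside the symmetric group on `N`. -/
def Hol (N : Type*) [Group N] : Subgroup (Equiv.Perm N) :=
  Subgroup.normalizer (MonoidHom.range (leftReg N))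

/-- A subgroup of `Equiv.Perm N` is semiregular if every non-identity element
has no fixed point on `N`. -/
def IsSemiregular {N : Type*} [Group N] (H : Subgroup (Equiv.Perm N)) : Prop :=
  ∀ g ∈ H, g ≠ 1 → ∀ x : N, g x ≠ x

/-- A subgroup of `Equiv.Perm N` is regular if its natural action on `N` is
simply transitive. -/
def IsRegularSubgroup {N : Type*} [Group N] (G : Subgroup (Equiv.Perm N)) : Prop :=
  ∀ x y : N, ∃! g : G, (g : Equiv.Perm N) x = y

/-- The cyclic group of order `n` (written multiplicatively). -/
abbrev Cyc (n : ℕ) := Multiplicative (ZMod n)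

/-! ### Generalities on the holomorph -/

section HolGeneral

variable {N : Type*} [Group N]

/-- `MulAut` as permutations. -/
def toP : MulAut N →* Perm N := MulAut.toPerm (M := N)

@[simp] lemma leftReg_apply (x y : N) : leftReg N x y = x * y := rfl
@[simp] lemma toP_apply (φ : MulAut N) (x : N) : toP φ x = φ x := rfl

lemma hol_mul {g : Perm N} (hg : g ∈ Hol N) (x w : N) :
    g (x * w) = g x * (g 1)⁻¹ * g w := by
  have h1 : leftReg N x ∈ MonoidHom.range (leftReg N) := ⟨x, rfl⟩
  rw [Hol, Subgroup.mem_normalizer_iff] at hg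
  obtain ⟨y, hy⟩ := (hg (leftReg N x)).1 h1
  have h2 : ∀ z, y * z = g (x * g⁻¹ z) := by
    intro z
    have := congrFun (congrArg (fun (e : Perm N) => (e : N → N)) hy) z
    simpa using this
  have hy1 := (h2 (g 1)).symm
  simp only [Perm.coe_inv, Equiv.symm_apply_apply, mul_one] at hy1
  have hw := h2 (g w)
  simp only [Perm.coe_inv, Equiv.symm_apply_apply] at hw
  rw [← hw, hy1]
  group

/-- The automorphism part of an element of the holomorph. -/
def holAutFun (g : Hol N) : MulAut N where
  toFun x := (g.1 1)⁻¹ * g.1 x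
  invFun x := g.1⁻¹ (g.1 1 * x)
  left_inv x := by simp
  right_inv x := by
    simp only [Subgroup.coe_inv, Perm.coe_inv, Equiv.apply_symm_apply]
    group
  map_mul' x y := by
    have := hol_mul g.2 x y
    simp only [this]
    group

@[simp] lemma holAutFun_apply (g : Hol N) (x : N) :
    holAutFun g x = (g.1 1)⁻¹ * g.1 x := rfl

/-- The projection of the holomorph onto the automorphism group. -/
def holAut : Hol N →* MulAut N where
  toFun := holAutFun
  map_one' := by ext x; simp
  map_mul' g h := by
    ext x
    simp only [holAutFun_apply, MulAut.mul_apply]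
    have hgh : ((g * h).1 : Perm N) x = g.1 (h.1 x) := rfl
    have hgh1 : ((g * h).1 : Perm N) 1 = g.1 (h.1 1) := rfl
    rw [hgh, hgh1]
    have key := hol_mul g.2 ((h.1 1)⁻¹) (h.1 x)
    have key2 := hol_mul g.2 (h.1 1) ((h.1 1)⁻¹)
    simp only [mul_inv_cancel] at key2
    have hinv : (g.1 : Perm N) ((h.1 1)⁻¹)
        = g.1 1 * (g.1 (h.1 1))⁻¹ * g.1 1 := by
      calc (g.1 : Perm N) ((h.1 1)⁻¹)
          = (g.1 (h.1 1) * (g.1 1)⁻¹)⁻¹ * (g.1 (h.1 1) * (g.1 1)⁻¹ * g.1 ((h.1 1)⁻¹)) := by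
            group
        _ = (g.1 (h.1 1) * (g.1 1)⁻¹)⁻¹ * g.1 1 := by rw [← key2]
        _ = g.1 1 * (g.1 (h.1 1))⁻¹ * g.1 1 := by group
    rw [key, hinv]
    group

lemma leftReg_conj_aut (φ : MulAut N) (y : N) :
    toP φ * leftReg N y * (toP φ)⁻¹ = leftReg N (φ y) := by
  ext z
  simp only [Perm.mul_apply, leftReg_apply]
  rw [show ((toP φ)⁻¹ : Perm N) z = φ⁻¹ z from rfl]
  simp only [toP_apply, map_mul]
  simp

lemma autPerm_mem_hol (φ : MulAut N) : toP φ ∈ Hol N := by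
  rw [Hol, Subgroup.mem_normalizer_iff]
  intro q
  constructor
  · rintro ⟨y, rfl⟩; exact ⟨φ y, (leftReg_conj_aut φ y).symm⟩
  · rintro ⟨y, hy⟩
    refine ⟨φ⁻¹ y, ?_⟩
    have h := leftReg_conj_aut φ⁻¹ y
    rw [map_inv] at h
    rw [← h, hy]
    group

lemma leftReg_mem_hol (x : N) : leftReg N x ∈ Hol N :=
  Subgroup.le_normalizer ⟨x, rfl⟩

/-- The counting bijection for the holomorph. -/
def holEquivProd : Hol N ≃ N × MulAut N where
  toFun g := (g.1 1, holAut g)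
  invFun := fun (x, φ) => ⟨leftReg N x * toP φ,
    Subgroup.mul_mem _ (leftReg_mem_hol x) (autPerm_mem_hol φ)⟩
  left_inv g := by
    ext z
    simp only [Subgroup.coe_mul, Perm.mul_apply, leftReg_apply, toP_apply]
    show (g.1 : Perm N) 1 * ((g.1 1)⁻¹ * g.1 z) = g.1 z
    group
  right_inv := fun (x, φ) => by
    have h1 : (leftReg N x * toP φ : Perm N) 1 = x := by
      simp only [Perm.mul_apply, toP_apply, leftReg_apply, map_one, mul_one]
    refine Prod.ext h1 ?_
    ext z
    show ((leftReg N x * toP φ : Perm N) 1)⁻¹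
        * (leftReg N x * toP φ : Perm N) z = φ z
    rw [h1]
    simp only [Perm.mul_apply, toP_apply, leftReg_apply]
    group

lemma card_hol : Nat.card (Hol N) = Nat.card N * Nat.card (MulAut N) := by
  rw [Nat.card_congr holEquivProd, Nat.card_prod]

end HolGeneral

/-! ### Automorphisms of dihedral groups -/

section DihedralAut

open DihedralGroup

variable {n : ℕ}

/-- Index of a dihedral element. -/
def rotIdx : DihedralGroup n → ZMod n
  | .r i => i
  | .sr i => i

@[simp] lemma rotIdx_r (i : ZMod n) : rotIdx (r i) = i := rfl
@[simp] lemma rotIdx_sr (i : ZMod n) : rotIdx (sr i) = i := rfl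

lemma r_pow (i : ZMod n) (k : ℕ) : (r i) ^ k = r ((k : ZMod n) * i) := by
  induction k with
  | zero => simp
  | succ k ih => rw [pow_succ, ih, r_mul_r]; push_cast; ring_nf

lemma orderOf_r_dvd (i : ZMod n) : orderOf (r i) ∣ n :=
  orderOf_dvd_of_pow_eq_one (by rw [_root_.r_pow]; simp)

lemma aut_r (hn : Odd n) (φ : MulAut (DihedralGroup n)) (i : ZMod n) :
    ∃ j, φ (r i) = r j := by
  rcases heq : φ (r i) with j | j
  · exact ⟨j, rfl⟩
  · exfalso
    have h1 : orderOf (φ (r i)) = orderOf (r i) := orderOf_injective φ.toMonoidHom φ.injective _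
    rw [heq, orderOf_sr] at h1
    have h2 : (2 : ℕ) ∣ n := h1 ▸ orderOf_r_dvd i
    exact (Nat.not_even_iff_odd.mpr hn) (even_iff_two_dvd.mpr h2)

lemma aut_sr (hn : Odd n) (φ : MulAut (DihedralGroup n)) (i : ZMod n) :
    ∃ j, φ (sr i) = sr j := by
  rcases heq : φ (sr i) with j | j
  · exfalso
    obtain ⟨k, hk⟩ := aut_r hn φ⁻¹ j
    have : φ⁻¹ (φ (sr i)) = sr i := by simp
    rw [heq, hk] at this
    exact absurd this (by simp)
  · exact ⟨j, rfl⟩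

/-- The multiplier of an automorphism. -/
def aFun (φ : MulAut (DihedralGroup n)) : ZMod n := rotIdx (φ (r 1))
/-- The translation part of an automorphism. -/
def bFun (φ : MulAut (DihedralGroup n)) : ZMod n := rotIdx (φ (sr 0))

variable [NeZero n]

lemma phi_r (hn : Odd n) (φ : MulAut (DihedralGroup n)) (i : ZMod n) :
    φ (r i) = r (aFun φ * i) := by
  obtain ⟨j, hj⟩ := aut_r hn φ 1
  have ha : aFun φ = j := by rw [aFun, hj, rotIdx_r]
  have : r i = (r 1 : DihedralGroup n) ^ i.val := by
    rw [_root_.r_pow, mul_one, ZMod.natCast_zmod_val]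
  rw [this, map_pow, hj, _root_.r_pow, ha, ZMod.natCast_zmod_val, mul_comm]

lemma phi_sr (hn : Odd n) (φ : MulAut (DihedralGroup n)) (i : ZMod n) :
    φ (sr i) = sr (bFun φ + aFun φ * i) := by
  obtain ⟨j, hj⟩ := aut_sr hn φ 0
  have hb : bFun φ = j := by rw [bFun, hj, rotIdx_sr]
  have : sr i = (sr 0 : DihedralGroup n) * r i := by rw [sr_mul_r, zero_add]
  rw [this, map_mul, hj, phi_r hn, hb, sr_mul_r]

lemma aFun_mul_aFun_inv (hn : Odd n) (φ : MulAut (DihedralGroup n)) :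
    aFun φ * aFun φ⁻¹ = 1 := by
  have h1 : φ (r 1) = r (aFun φ) := by rw [phi_r hn, mul_one]
  have h2 : φ⁻¹ (r (aFun φ)) = r (aFun φ⁻¹ * aFun φ) := phi_r hn φ⁻¹ _
  rw [← h1] at h2
  simp only [MulAut.inv_apply_self] at h2
  have := r.inj h2
  rw [mul_comm] at this
  exact this.symm

/-- The dihedral automorphism `r i ↦ r (a i)`, `sr i ↦ sr (b + a i)`. -/
def ψ (a : (ZMod n)ˣ) (b : ZMod n) : MulAut (DihedralGroup n) where
  toFun x := match x with
    | .r i => r ((a : ZMod n) * i)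
    | .sr i => sr (b + (a : ZMod n) * i)
  invFun x := match x with
    | .r i => r ((a⁻¹ : (ZMod n)ˣ) * i)
    | .sr i => sr ((a⁻¹ : (ZMod n)ˣ) * (i - b))
  left_inv x := by
    rcases x with i | i
    · show r _ = r i
      congr 1
      rw [← mul_assoc]
      simp [Units.inv_mul]
    · show sr _ = sr i
      congr 1
      rw [add_comm, mul_comm ((a : ZMod n)) i]
      rw [add_sub_cancel_right, mul_left_comm, Units.inv_mul, mul_one]
  right_inv x := by
    rcases x with i | i
    · show r _ = r i
      congr 1
      rw [← mul_assoc]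
      simp [Units.mul_inv]
    · show sr _ = sr i
      congr 1
      rw [← mul_assoc]
      simp [Units.mul_inv]
  map_mul' x y := by
    rcases x with i | i <;> rcases y with j | j
    · show r ((a : ZMod n) * (i + j)) = r ((a : ZMod n) * i) * r ((a : ZMod n) * j)
      rw [r_mul_r]; congr 1; ring
    · show sr (b + (a : ZMod n) * (j - i))
        = r ((a : ZMod n) * i) * sr (b + (a : ZMod n) * j)
      rw [r_mul_sr]; congr 1; ring
    · show sr (b + (a : ZMod n) * (i + j))
        = sr (b + (a : ZMod n) * i) * r ((a : ZMod n) * j)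
      rw [sr_mul_r]; congr 1; ring
    · show r ((a : ZMod n) * (j - i))
        = sr (b + (a : ZMod n) * i) * sr (b + (a : ZMod n) * j)
      rw [sr_mul_sr]; congr 1; ring

omit [NeZero n] in
@[simp] lemma ψ_r (a : (ZMod n)ˣ) (b i : ZMod n) : ψ a b (r i) = r ((a : ZMod n) * i) := rfl
omit [NeZero n] in
@[simp] lemma ψ_sr (a : (ZMod n)ˣ) (b i : ZMod n) :
    ψ a b (sr i) = sr (b + (a : ZMod n) * i) := rfl

/-- The unit given by an automorphism. -/
def aUnit (hn : Odd n) (φ : MulAut (DihedralGroup n)) : (ZMod n)ˣ :=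
  ⟨aFun φ, aFun φ⁻¹, aFun_mul_aFun_inv hn φ, by
    have := aFun_mul_aFun_inv hn φ⁻¹; rwa [inv_inv] at this⟩

/-- Classification of dihedral automorphisms. -/
noncomputable def autEquiv (hn : Odd n) :
    MulAut (DihedralGroup n) ≃ (ZMod n)ˣ × ZMod n where
  toFun φ := (aUnit hn φ, bFun φ)
  invFun := fun (a, b) => ψ a b
  left_inv φ := by
    ext x
    rcases x with i | i
    · rw [ψ_r, phi_r hn]; rfl
    · rw [ψ_sr, phi_sr hn]; rfl
  right_inv := fun (a, b) => by
    refine Prod.ext (Units.ext ?_) ?_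
    · show aFun (ψ a b) = (a : ZMod n)
      rw [aFun, ψ_r, mul_one, rotIdx_r]
    · show bFun (ψ a b) = b
      rw [bFun, ψ_sr, mul_zero, add_zero, rotIdx_sr]

/-- The multiplier homomorphism. -/
noncomputable def aHom (hn : Odd n) : MulAut (DihedralGroup n) →* (ZMod n)ˣ where
  toFun := aUnit hn
  map_one' := by
    apply Units.ext
    show aFun 1 = 1
    rw [aFun]
    rfl
  map_mul' φ χ := by
    apply Units.ext
    show aFun (φ * χ) = aFun φ * aFun χ
    have : (φ * χ) (r 1) = r (aFun φ * aFun χ) := by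
      rw [MulAut.mul_apply, phi_r hn χ, mul_one, phi_r hn φ]
    rw [aFun, this, rotIdx_r]

lemma aHom_ψ (hn : Odd n) (a : (ZMod n)ˣ) (b : ZMod n) : aHom hn (ψ a b) = a := by
  apply Units.ext
  show aFun (ψ a b) = (a : ZMod n)
  rw [aFun, ψ_r, mul_one, rotIdx_r]

/-- The reflection-detecting homomorphism. -/
def εHom : DihedralGroup n →* Multiplicative (ZMod 2) where
  toFun x := match x with
    | .r _ => 1
    | .sr _ => Multiplicative.ofAdd 1
  map_one' := rfl
  map_mul' x y := by
    have h2 : (Multiplicative.ofAdd (1 : ZMod 2)) * (Multiplicative.ofAdd (1 : ZMod 2)) = 1 := by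
      decide
    rcases x with i | i <;> rcases y with j | j <;>
      simp only [r_mul_r, r_mul_sr, sr_mul_r, sr_mul_sr] <;> simp [h2]

omit [NeZero n] in
@[simp] lemma εHom_r (i : ZMod n) : εHom (r i) = 1 := rfl
omit [NeZero n] in
@[simp] lemma εHom_sr (i : ZMod n) : εHom (sr i) = Multiplicative.ofAdd 1 := rfl

lemma εHom_aut (hn : Odd n) (φ : MulAut (DihedralGroup n)) (x : DihedralGroup n) :
    εHom (φ x) = εHom x := by
  rcases x with i | i
  · rw [phi_r hn]; rfl
  · rw [phi_sr hn]; rfl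

/-- The reflection-detecting homomorphism on the holomorph. -/
def ηHom (hn : Odd n) : Hol (DihedralGroup n) →* Multiplicative (ZMod 2) where
  toFun g := εHom (g.1 1)
  map_one' := by
    show εHom ((1 : Perm (DihedralGroup n)) 1) = 1
    simp
  map_mul' g h := by
    show εHom ((g * h).1 1) = εHom (g.1 1) * εHom (h.1 1)
    have h1 : ((g * h).1 : Perm _) 1 = g.1 (h.1 1) := rfl
    have h2 : (g.1 : Perm _) (h.1 1) = g.1 1 * holAutFun g (h.1 1) := by
      rw [holAutFun_apply]; group
    rw [h1, h2, map_mul, εHom_aut hn (holAutFun g)]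

end DihedralAut

/-- `Hol(D_{2p²})` has a unique (hence normal) Sylow `p`-subgroup, of order `p⁵`. -/
theorem statement2 (p : ℕ) (hp : p.Prime) (hodd : Odd p) :
    Nat.card (Sylow p (Hol (DihedralGroup (p ^ 2)))) = 1 ∧
    ∀ P : Sylow p (Hol (DihedralGroup (p ^ 2))),
      (P : Subgroup (Hol (DihedralGroup (p ^ 2)))).Normal ∧
      Nat.card (P : Subgroup (Hol (DihedralGroup (p ^ 2)))) = p ^ 5 := by
  haveI : Fact p.Prime := ⟨hp⟩
  haveI : NeZero (p ^ 2) := ⟨pow_ne_zero 2 hp.ne_zero⟩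
  have hn : Odd (p ^ 2) := hodd.pow
  have hdvd : p ∣ p ^ 2 := dvd_pow_self p (by norm_num)
  set G := Hol (DihedralGroup (p ^ 2)) with hG
  -- cardinalities
  have cardU : Nat.card (ZMod (p ^ 2))ˣ = p * (p - 1) := by
    rw [Nat.card_eq_fintype_card, ZMod.card_units_eq_totient,
      Nat.totient_prime_pow hp (by norm_num)]
    norm_num
  have cardAut : Nat.card (MulAut (DihedralGroup (p ^ 2))) = p * (p - 1) * p ^ 2 := by
    rw [Nat.card_congr (autEquiv hn), Nat.card_prod, cardU, Nat.card_zmod]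
  have cardG : Nat.card G = 2 * (p - 1) * p ^ 5 := by
    rw [hG, card_hol, DihedralGroup.nat_card, cardAut]
    ring
  -- the homomorphism onto `(ZMod p)ˣ × C₂`
  let F : G →* (ZMod p)ˣ × Multiplicative (ZMod 2) :=
    MonoidHom.prod ((ZMod.unitsMap hdvd).comp ((aHom hn).comp holAut)) (ηHom hn)
  have hFsurj : Function.Surjective F := by
    rintro ⟨u, c⟩
    obtain ⟨a, ha⟩ := ZMod.unitsMap_surjective hdvd u
    set g1 : G := ⟨toP (ψ a 0), autPerm_mem_hol _⟩ with hg1def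
    set g2 : G := ⟨leftReg _ (DihedralGroup.sr 0), leftReg_mem_hol _⟩ with hg2def
    have hAut1 : holAut g1 = ψ a 0 := by
      ext x
      show (toP (ψ a 0) 1)⁻¹ * toP (ψ a 0) x = ψ a 0 x
      simp only [toP_apply, map_one, inv_one, one_mul]
    have hAut2 : holAut g2 = 1 := by
      ext x
      show (leftReg _ (DihedralGroup.sr 0) 1)⁻¹ * leftReg _ (DihedralGroup.sr 0) x = x
      simp only [leftReg_apply, mul_one]
      group
    have hF1 : F g1 = (u, 1) := by
      refine Prod.ext ?_ ?_
      · show ZMod.unitsMap hdvd (aHom hn (holAut g1)) = u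
        rw [hAut1, aHom_ψ, ha]
      · show εHom (g1.1 1) = 1
        have : (g1.1 : Perm _) 1 = 1 := by
          show toP (ψ a 0) 1 = 1
          simp only [toP_apply, map_one]
        rw [this, map_one]
    have hF2 : F g2 = (1, Multiplicative.ofAdd 1) := by
      refine Prod.ext ?_ ?_
      · show ZMod.unitsMap hdvd (aHom hn (holAut g2)) = 1
        rw [hAut2, map_one, map_one]
      · show εHom (g2.1 1) = Multiplicative.ofAdd 1
        have : (g2.1 : Perm _) 1 = DihedralGroup.sr 0 := by
          show leftReg _ (DihedralGroup.sr 0) 1 = _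
          simp
        rw [this, εHom_sr]
    have hc : c = 1 ∨ c = Multiplicative.ofAdd 1 := by revert c; decide
    rcases hc with rfl | rfl
    · exact ⟨g1, hF1⟩
    · refine ⟨g1 * g2, ?_⟩
      rw [map_mul, hF1, hF2, Prod.mk_mul_mk, mul_one, one_mul]
  -- the kernel is a normal subgroup of order `p ^ 5`
  have cardTarget : Nat.card ((ZMod p)ˣ × Multiplicative (ZMod 2)) = (p - 1) * 2 := by
    rw [Nat.card_prod, Nat.card_eq_fintype_card, ZMod.card_units_eq_totient,
      Nat.totient_prime hp]
    simp [Nat.card_eq_fintype_card]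
  have cardKer : Nat.card F.ker = p ^ 5 := by
    have h1 := Subgroup.card_eq_card_quotient_mul_card_subgroup (F.ker)
    have h2 : Nat.card (G ⧸ F.ker) = (p - 1) * 2 := by
      rw [Nat.card_congr (QuotientGroup.quotientKerEquivOfSurjective F hFsurj).toEquiv]
      exact cardTarget
    rw [h2, cardG] at h1
    have hpos : 0 < (p - 1) * 2 := by
      have := hp.two_le
      rcases hodd with ⟨k, hk⟩
      omega
    have : (p - 1) * 2 * p ^ 5 = (p - 1) * 2 * Nat.card F.ker := by
      rw [← h1]; ring
    exact (Nat.eq_of_mul_eq_mul_left hpos this).symm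
  -- Sylow theory
  have hNotDvd : ¬ p ∣ 2 * (p - 1) := by
    intro h
    have hp2 := hp.two_le
    have hp3 : 3 ≤ p := by rcases hodd with ⟨k, hk⟩; omega
    rcases (Nat.Prime.dvd_mul hp).mp h with h2 | h3
    · exact absurd (Nat.le_of_dvd (by norm_num) h2) (by omega)
    · exact Nat.not_dvd_of_pos_of_lt (by omega) (by omega) h3
  have hfact : (Nat.card G).factorization p = 5 := by
    rw [cardG]
    have h1 : 2 * (p - 1) ≠ 0 := by have := hp.two_le; rcases hodd with ⟨k, hk⟩; omega
    rw [Nat.factorization_mul h1 (pow_ne_zero 5 hp.ne_zero)]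
    simp [Nat.factorization_eq_zero_of_not_dvd hNotDvd, hp.factorization_pow]
  have hpKer : IsPGroup p F.ker := IsPGroup.of_card cardKer
  obtain ⟨Q, hQle⟩ := hpKer.exists_le_sylow
  have cardQ : Nat.card Q = p ^ 5 := by
    rw [Sylow.card_eq_multiplicity, hfact]
  have hKQ : F.ker = (Q : Subgroup G) := by
    refine Subgroup.eq_of_le_of_card_ge hQle ?_
    rw [cardKer]
    exact le_of_eq cardQ
  have hQnormal : (Q : Subgroup G).Normal := by
    rw [← hKQ]
    exact MonoidHom.normal_ker F
  haveI hu : Unique (Sylow p G) := Sylow.unique_of_normal Q hQnormal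
  constructor
  · exact Nat.card_unique
  · intro P
    have hPQ : P = Q := Subsingleton.elim P Q
    subst hPQ
    exact ⟨hQnormal, cardQ⟩
end

section
/- Let p be an odd prime. The holomorph Hol(C_p × D_{2p}) has exactly p² − p semiregular subgroups of order p², and each of these subgroups is isomorphic to C_p × C_p. -/
open Equiv

/-- The group `C_p × C_p` (written multiplicatively). -/
abbrev Vp (p : ℕ) := Multiplicative (ZMod p × ZMod p)

/-- The action of `C_2` on `C_p × C_p` in which the generator acts by inversion. -/
def actC2 (p : ℕ) : Multiplicative (ZMod 2) →* MulAut (Vp p) where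
  toFun c := if Multiplicative.toAdd c = 0 then 1 else MulEquiv.inv (Vp p)
  map_one' := by simp
  map_mul' a b := by
    have h : ∀ x : ZMod 2, x = 0 ∨ x = 1 := by decide
    have hmul : Multiplicative.toAdd (a * b) = Multiplicative.toAdd a + Multiplicative.toAdd b := rfl
    have h11 : (1 : ZMod 2) + 1 = 0 := by decide
    have hinv : (1 : MulAut (Vp p)) = MulEquiv.inv (Vp p) * MulEquiv.inv (Vp p) := by
      refine MulEquiv.ext fun x => ?_
      show x = (x⁻¹)⁻¹
      simp
    rcases h (Multiplicative.toAdd a) with ha | ha <;> rcases h (Multiplicative.toAdd b) with hb | hb <;>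
      simp [hmul, ha, hb, h11, hinv]

/-- The semidirect product `(C_p × C_p) ⋊ C_2`, where the generator of `C_2`
acts by inversion. -/
abbrev GD (p : ℕ) := SemidirectProduct (Vp p) (Multiplicative (ZMod 2)) (actC2 p)


namespace S7

open DihedralGroup Multiplicative

variable {p : ℕ}


@[simp] lemma leftReg_apply {N : Type*} [Group N] (n x : N) : leftReg N n x = n * x := rfl

/-- Backward direction of holomorph membership. -/
lemma mem_hol_of {N : Type*} [Group N] (g : Equiv.Perm N) (n : N) (α : MulAut N)
    (h : ∀ x, g x = n * α x) : g ∈ Hol N := by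
  have key : ∀ m : N, g * leftReg N m * g⁻¹ = leftReg N (n * α m * n⁻¹) := by
    intro m
    ext x
    have hx : g (g⁻¹ x) = x := g.apply_symm_apply x
    calc (g * leftReg N m * g⁻¹) x = g (m * g⁻¹ x) := rfl
      _ = n * α (m * g⁻¹ x) := h _
      _ = n * (α m * α (g⁻¹ x)) := by rw [map_mul]
      _ = (n * α m * n⁻¹) * (n * α (g⁻¹ x)) := by group
      _ = (n * α m * n⁻¹) * g (g⁻¹ x) := by rw [h]
      _ = leftReg N (n * α m * n⁻¹) x := by rw [hx]; rfl
  rw [Hol, Subgroup.mem_normalizer_iff]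
  intro h'
  constructor
  · rintro ⟨m, rfl⟩
    exact ⟨n * α m * n⁻¹, (key m).symm⟩
  · rintro ⟨k, hk⟩
    refine ⟨α⁻¹ (n⁻¹ * k * n), ?_⟩
    have := key (α⁻¹ (n⁻¹ * k * n))
    rw [show α (α⁻¹ (n⁻¹ * k * n)) = n⁻¹ * k * n from α.apply_symm_apply _] at this
    have hk' : leftReg N (n * (n⁻¹ * k * n) * n⁻¹) = leftReg N k := by group
    rw [hk', hk] at this
    have h2 := mul_left_cancel (mul_right_cancel this)
    rw [h2]

/-- Forward direction: decomposition of a holomorph element. -/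
lemma hol_decomp {N : Type*} [Group N] [Finite N] (g : Equiv.Perm N) (hg : g ∈ Hol N) :
    ∃ (n : N) (α : MulAut N), ∀ x, g x = n * α x := by
  rw [Hol, Subgroup.mem_normalizer_iff] at hg
  have key : ∀ m : N, ∃ cm : N, ∀ x, g (m * x) = cm * g x := by
    intro m
    obtain ⟨cm, hcm⟩ := (hg (leftReg N m)).mp ⟨m, rfl⟩
    refine ⟨cm, fun x => ?_⟩
    have := congrFun (congrArg (fun e : Equiv.Perm N => (e : N → N)) hcm) (g x)
    simpa [mul_assoc] using this.symm
  choose c hc using key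
  have hmul : ∀ m m', c (m * m') = c m * c m' := by
    intro m m'
    have h1 : g (m * (m' * 1)) = c m * (c m' * g 1) := by rw [hc, hc]
    have h2 : g (m * m' * 1) = c (m * m') * g 1 := hc _ _
    rw [mul_assoc] at h2
    apply mul_right_cancel (b := g 1)
    rw [h2.symm.trans h1, mul_assoc]
  have hinj : Function.Injective c := by
    intro m m' h
    have h1 : g (m * 1) = c m * g 1 := hc _ _
    have h2 : g (m' * 1) = c m' * g 1 := hc _ _
    have : g (m * 1) = g (m' * 1) := by rw [h1, h2, h]
    simpa using g.injective this
  have hbij : Function.Bijective c := Finite.injective_iff_bijective.mp hinj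
  have hone : c 1 = 1 := by
    have h1 : g (1 * 1) = c 1 * g 1 := hc 1 1
    simp only [one_mul] at h1
    exact mul_right_cancel (a := c 1) (b := g 1) (c := 1) (by rw [one_mul, ← h1])
  let C : N →* N := ⟨⟨c, hone⟩, hmul⟩
  let α₀ : MulAut N := MulEquiv.ofBijective C hbij
  refine ⟨g 1, (MulAut.conj (g 1))⁻¹ * α₀, fun x => ?_⟩
  have hα : ((MulAut.conj (g 1))⁻¹ * α₀) x = (g 1)⁻¹ * (c x * g 1) := by
    simp [MulAut.conj, MulAut.inv_def, α₀, MulEquiv.ofBijective, C, mul_assoc]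
  rw [hα]
  have : g (x * 1) = c x * g 1 := hc _ _
  rw [mul_one] at this
  rw [this]
  group

/-- If `g x = n * α x` pointwise and `g ^ k = 1` then `α ^ k = 1`. -/
lemma aut_pow_eq_one {N : Type*} [Group N] (g : Equiv.Perm N) (n : N) (α : MulAut N)
    (h : ∀ x, g x = n * α x) (k : ℕ) (hk : g ^ k = 1) : α ^ k = 1 := by
  have key : ∀ j : ℕ, ∃ m : N, ∀ x, (g ^ j) x = m * (α ^ j) x := by
    intro j
    induction j with
    | zero => exact ⟨1, fun x => by simp⟩
    | succ j ih =>
      obtain ⟨m, hm⟩ := ih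
      refine ⟨m * (α ^ j) n, fun x => ?_⟩
      have h1 : (g ^ (j + 1)) x = (g ^ j) (g x) := by
        rw [pow_succ]; rfl
      rw [h1, h x, hm, map_mul]
      have h2 : (α ^ (j + 1)) x = (α ^ j) (α x) := by
        rw [pow_succ]; rfl
      rw [h2, mul_assoc]
  obtain ⟨m, hm⟩ := key k
  rw [hk] at hm
  have hm1 : (1 : N) = m * (α ^ k) 1 := hm 1
  rw [map_one, mul_one] at hm1
  ext x
  have := hm x
  simp only [Perm.one_apply] at this
  rw [← hm1, one_mul] at this
  exact this.symm



open DihedralGroup Multiplicative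

variable {p : ℕ}

abbrev Np (p : ℕ) := Multiplicative (ZMod p) × DihedralGroup p

/-- An additive self-map of `ZMod p` is multiplication by `f 1`. -/
lemma addfun_eq [NeZero p] (f : ZMod p → ZMod p)
    (hf : ∀ a b : ZMod p, f (a + b) = f a + f b) (z : ZMod p) : f z = z * f 1 := by
  have h0 : f 0 = 0 := by
    have h := hf 0 0
    rw [add_zero] at h
    exact left_eq_add.mp h
  have hn : ∀ n : ℕ, f (n : ZMod p) = (n : ZMod p) * f 1 := by
    intro n
    induction n with
    | zero => simpa using h0
    | succ n ih =>
      push_cast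
      rw [hf, ih]
      ring
  calc f z = f ((z.val : ℕ) : ZMod p) := by rw [ZMod.natCast_zmod_val]
    _ = ((z.val : ℕ) : ZMod p) * f 1 := hn _
    _ = z * f 1 := by rw [ZMod.natCast_zmod_val]

lemma unit_eq_one (hp : p.Prime) (u : ZMod p) (hu : u ≠ 0) (h : u ^ p ^ 2 = 1) : u = 1 := by
  haveI := Fact.mk hp
  have h1 : u ^ (p - 1) = 1 := ZMod.pow_card_sub_one_eq_one hu
  have d1 : orderOf u ∣ p ^ 2 := orderOf_dvd_of_pow_eq_one h
  have d2 : orderOf u ∣ p - 1 := orderOf_dvd_of_pow_eq_one h1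
  have hc : Nat.Coprime p (p - 1) := by
    obtain ⟨m, rfl⟩ : ∃ m, p = m + 1 := ⟨p - 1, by have := hp.pos; omega⟩
    simpa using Nat.coprime_succ_self m
  have hcop : Nat.Coprime (p ^ 2) (p - 1) := Nat.Coprime.pow_left 2 hc
  have := Nat.dvd_gcd d1 d2
  rw [Nat.Coprime.gcd_eq_one hcop] at this
  rw [← pow_one u, ← Nat.dvd_one.mp this]
  exact pow_orderOf_eq_one u

lemma two_ne_zero' (hp : p.Prime) (hodd : Odd p) : (2 : ZMod p) ≠ 0 := by
  haveI := Fact.mk hp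
  intro h
  rw [show ((2 : ZMod p)) = ((2 : ℕ) : ZMod p) by norm_cast] at h
  rw [ZMod.natCast_eq_zero_iff] at h
  have := (Nat.prime_dvd_prime_iff_eq hp Nat.prime_two).mp h
  rw [this] at hodd
  exact (by decide : ¬ Odd 2) hodd

lemma half_zero (hp : p.Prime) (hodd : Odd p) (t : ZMod p) (ht : t + t = 0) : t = 0 := by
  haveI := Fact.mk hp
  have h2t : (2 : ZMod p) * t = 0 := by linear_combination ht
  rcases mul_eq_zero.mp h2t with h | h
  · exact absurd h (two_ne_zero' hp hodd)
  · exact h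

lemma aut_eq_conj (hp : p.Prime) (hodd : Odd p) (α : MulAut (Np p)) (hα : α ^ p ^ 2 = 1) :
    ∃ m : ZMod p, ∀ x : Np p, α x = (1, r m) * x * (1, r m)⁻¹ := by
  haveI := Fact.mk hp
  have h2 : (2 : ZMod p) ≠ 0 := two_ne_zero' hp hodd
  have hhalf : ∀ t : ZMod p, t + t = 0 → t = 0 := by
    intro t ht
    have h2t : (2 : ZMod p) * t = 0 := by linear_combination ht
    rcases mul_eq_zero.mp h2t with h | h
    · exact absurd h h2
    · exact h
  -- (a) `α` preserves the centre pointwise up to first component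
  have hcomm : ∀ (z : Multiplicative (ZMod p)) (y : Np p), α (z, 1) * y = y * α (z, 1) := by
    intro z y
    obtain ⟨y', rfl⟩ := α.surjective y
    rw [← map_mul, ← map_mul]
    congr 1
    exact Prod.ext (mul_comm z y'.1) (by simp)
  have hcentral : ∀ z : Multiplicative (ZMod p), ∃ w, α (z, (1 : DihedralGroup p)) = (w, 1) := by
    intro z
    rcases hd : α (z, (1 : DihedralGroup p)) with ⟨w, d⟩
    refine ⟨w, ?_⟩
    have h1 := hcomm z (1, sr 0)
    have h2' := hcomm z (1, r 1)
    rw [hd] at h1 h2'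
    have hd1 : d * sr 0 = sr 0 * d := congrArg Prod.snd h1
    have hd2 : d * r 1 = r 1 * d := congrArg Prod.snd h2'
    cases d with
    | r i =>
      simp only [r_mul_sr, sr_mul_r, sr.injEq] at hd1
      -- hd1 : 0 - i = 0 + i
      have hi : i = 0 := by
        apply hhalf
        linear_combination -hd1
      rw [hi, ← DihedralGroup.one_def]
    | sr i =>
      exfalso
      simp only [sr_mul_r, r_mul_sr, sr.injEq] at hd2
      -- hd2 : i + 1 = i - 1
      have : (2 : ZMod p) = 0 := by linear_combination hd2
      exact h2 this
  -- (b) α on the first factor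
  have hfadd : ∀ a b : ZMod p,
      toAdd ((α (ofAdd (a + b), 1)).1) = toAdd ((α (ofAdd a, 1)).1) + toAdd ((α (ofAdd b, 1)).1) := by
    intro a b
    have : α (ofAdd (a + b), 1) = α (ofAdd a, 1) * α (ofAdd b, 1) := by
      rw [← map_mul, Prod.mk_mul_mk, mul_one, ← ofAdd_add]
    rw [this, Prod.fst_mul, toAdd_mul]
  set u : ZMod p := toAdd ((α (ofAdd (1 : ZMod p), 1)).1) with hu_def
  have hf : ∀ a : ZMod p, toAdd ((α (ofAdd a, 1)).1) = a * u :=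
    fun a => addfun_eq (fun a => toAdd ((α (ofAdd a, 1)).1)) hfadd a
  have hαz : ∀ a : ZMod p, α (ofAdd a, 1) = (ofAdd (a * u), 1) := by
    intro a
    obtain ⟨w, hw⟩ := hcentral (ofAdd a)
    have h' := hf a
    rw [hw] at h'
    rw [hw]
    have hwa : w = ofAdd (a * u) := by
      rw [← h']; rfl
    rw [hwa]
  have hiter : ∀ k : ℕ, (α ^ k) (ofAdd (1 : ZMod p), 1) = (ofAdd (u ^ k), 1) := by
    intro k
    induction k with
    | zero => simp
    | succ k ih =>
      have h1 : (α ^ (k + 1)) (ofAdd (1 : ZMod p), 1) = α ((α ^ k) (ofAdd (1 : ZMod p), 1)) := by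
        rw [pow_succ']; rfl
      rw [h1, ih, hαz, pow_succ]
  have hu2 : u ^ p ^ 2 = 1 := by
    have := hiter (p ^ 2)
    rw [hα] at this
    have h1 : (ofAdd (1 : ZMod p), (1 : DihedralGroup p)) = (ofAdd (u ^ p ^ 2), 1) := this
    have := congrArg (fun q : Np p => toAdd q.1) h1
    simpa using this.symm
  have hu0 : u ≠ 0 := by
    intro h
    have := hαz 1
    rw [h, mul_zero] at this
    have h1 : α (ofAdd (1 : ZMod p), 1) = α 1 := by rw [this, map_one]; rfl
    have h2'' := α.injective h1
    have := congrArg (fun q : Np p => toAdd q.1) h2''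
    simp only [toAdd_ofAdd, toAdd_one] at this
    exact one_ne_zero this
  have hu1 : u = 1 := unit_eq_one hp u hu0 hu2
  have hZ : ∀ a : ZMod p, α (ofAdd a, 1) = (ofAdd a, 1) := by
    intro a; rw [hαz, hu1, mul_one]
  -- (d) involutions
  have hinvol : ∀ y : Np p, y * y = 1 → y ≠ 1 → ∃ k, y = (1, sr k) := by
    rintro ⟨w, d⟩ hy hne
    have hw : w * w = 1 → w = 1 := by
      intro hww
      have : toAdd w + toAdd w = 0 := by
        have := congrArg toAdd hww
        rwa [toAdd_mul, toAdd_one] at this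
      have := hhalf _ this
      have : toAdd w = toAdd (1 : Multiplicative (ZMod p)) := by rwa [toAdd_one]
      exact toAdd.injective this
    cases d with
    | r i =>
      exfalso
      have h1 : (w * w, r i * r i) = ((1 : Multiplicative (ZMod p)), (1 : DihedralGroup p)) := hy
      have hww : w * w = 1 := congrArg Prod.fst h1
      have hrr : r i * r i = (1 : DihedralGroup p) := congrArg Prod.snd h1
      rw [r_mul_r, DihedralGroup.one_def, r.injEq] at hrr
      have hi : i = 0 := hhalf i hrr
      apply hne
      rw [hw hww, hi, ← DihedralGroup.one_def]
      rfl
    | sr i =>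
      refine ⟨i, ?_⟩
      have h1 : (w * w, sr i * sr i) = ((1 : Multiplicative (ZMod p)), (1 : DihedralGroup p)) := hy
      have hww : w * w = 1 := congrArg Prod.fst h1
      rw [hw hww]
  have hsr : ∀ i : ZMod p, ∃ k, α (1, sr i) = (1, sr k) := by
    intro i
    apply hinvol
    · rw [← map_mul, Prod.mk_mul_mk, mul_one, sr_mul_sr, sub_self, ← DihedralGroup.one_def]
      have : ((1 : Multiplicative (ZMod p)), (1 : DihedralGroup p)) = (1 : Np p) := rfl
      rw [this, map_one]
    · intro h
      have := α.injective (h.trans (map_one α).symm)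
      have h2'' : sr i = (1 : DihedralGroup p) := congrArg Prod.snd this
      rw [DihedralGroup.one_def] at h2''
      exact absurd h2'' (fun h => by cases h)
  obtain ⟨k0, hk0⟩ := hsr 0
  obtain ⟨k1, hk1⟩ := hsr 1
  have hr1 : α (1, r 1) = (1, r (k1 - k0)) := by
    have hprod : ((1, sr 0) : Np p) * (1, sr 1) = (1, r 1) := by
      rw [Prod.mk_mul_mk, mul_one, sr_mul_sr, sub_zero]
    rw [← hprod, map_mul, hk0, hk1, Prod.mk_mul_mk, mul_one, sr_mul_sr]
  set c : ZMod p := k1 - k0 with hc_def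
  have hpowr : ∀ (a : ZMod p) (n : ℕ), ((1, r a) : Np p) ^ n = (1, r ((n : ZMod p) * a)) := by
    intro a n
    induction n with
    | zero => rw [pow_zero, Nat.cast_zero, zero_mul]; rfl
    | succ n ih =>
      rw [pow_succ, ih, Prod.mk_mul_mk, mul_one, r_mul_r]
      have : ((n : ZMod p)) * a + a = ((n + 1 : ℕ) : ZMod p) * a := by push_cast; ring
      rw [this]
  have hra : ∀ i : ZMod p, ((1 : Multiplicative (ZMod p)), r i) = ((1, r 1) : Np p) ^ i.val := by
    intro i
    rw [hpowr, mul_one, ZMod.natCast_zmod_val]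
  have hαr : ∀ i : ZMod p, α (1, r i) = (1, r (c * i)) := by
    intro i
    rw [hra i, map_pow, hr1, hpowr, ZMod.natCast_zmod_val, mul_comm]
  have hiterr : ∀ k : ℕ, (α ^ k) (1, r 1) = ((1, r (c ^ k)) : Np p) := by
    intro k
    induction k with
    | zero => simp
    | succ k ih =>
      have h1 : (α ^ (k + 1)) ((1, r 1) : Np p) = α ((α ^ k) (1, r 1)) := by
        rw [pow_succ']; rfl
      rw [h1, ih, hαr, ← pow_succ']
  have hc2 : c ^ p ^ 2 = 1 := by
    have := hiterr (p ^ 2)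
    rw [hα] at this
    have h1 : ((1, r 1) : Np p) = (1, r (c ^ p ^ 2)) := this
    have := congrArg Prod.snd h1
    simp only [r.injEq] at this
    exact this.symm
  have hc0 : c ≠ 0 := by
    intro h
    have h1 := hαr 1
    rw [h, zero_mul] at h1
    have h2'' : α (1, r 1) = α 1 := by
      rw [h1, map_one]
      rfl
    have := α.injective h2''
    have h3 : r (1 : ZMod p) = (1 : DihedralGroup p) := congrArg Prod.snd this
    rw [DihedralGroup.one_def, r.injEq] at h3
    exact one_ne_zero h3
  have hcone : c = 1 := unit_eq_one hp c hc0 hc2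
  have hR : ∀ i : ZMod p, α (1, r i) = (1, r i) := by
    intro i; rw [hαr, hcone, one_mul]
  have hP : ∀ (w : Multiplicative (ZMod p)) (i : ZMod p), α (w, r i) = (w, r i) := by
    intro w i
    have hprod : ((w, r i) : Np p) = (w, (1 : DihedralGroup p)) * (1, r i) := by
      rw [Prod.mk_mul_mk, mul_one, one_mul]
    rw [hprod, map_mul, hR]
    have := hZ (toAdd w)
    rw [ofAdd_toAdd] at this
    rw [this]
  -- choose m with m + m = -k0
  set m : ZMod p := -(k0 * (2 : ZMod p)⁻¹) with hm_def
  have h2inv : (2 : ZMod p) * (2 : ZMod p)⁻¹ = 1 := mul_inv_cancel₀ h2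
  have hmm : m + m = -k0 := by
    rw [hm_def]
    linear_combination (-k0) * h2inv
  refine ⟨m, ?_⟩
  rintro ⟨w, d⟩
  have hrinv : (r m : DihedralGroup p)⁻¹ = r (-m) := by
    apply inv_eq_of_mul_eq_one_right
    rw [r_mul_r, add_neg_cancel]
    exact DihedralGroup.one_def.symm
  have hinv : ((1, r m) : Np p)⁻¹ = (1, r (-m)) := by
    rw [Prod.inv_mk, inv_one, hrinv]
  cases d with
  | r i =>
    rw [hP, hinv, Prod.mk_mul_mk, Prod.mk_mul_mk, one_mul, mul_one, r_mul_r, r_mul_r]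
    have : m + i + -m = i := by ring
    rw [this]
  | sr i =>
    have hsplit : ((w, sr i) : Np p) = (w, r (-i)) * (1, sr 0) := by
      rw [Prod.mk_mul_mk, mul_one, r_mul_sr]
      congr 1
      ring
    rw [hsplit, map_mul, hP, hk0, hinv]
    simp only [Prod.mk_mul_mk, one_mul, mul_one, r_mul_sr, sr_mul_r, r_mul_r,
      Prod.mk.injEq, sr.injEq]
    refine ⟨trivial, ?_⟩
    linear_combination hmm


def rReg (G : Type*) [Group G] : G →* Equiv.Perm G where
  toFun n := Equiv.mulRight n⁻¹
  map_one' := by ext x; simp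
  map_mul' a b := by ext x; simp [mul_assoc]

@[simp] lemma rReg_apply {G : Type*} [Group G] (n x : G) : rReg G n x = x * n⁻¹ := rfl

abbrev Mp (p : ℕ) := Multiplicative (ZMod p × ZMod p × ZMod p)

lemma inv_one_r (j : ZMod p) : ((1, r j) : Np p)⁻¹ = (1, r (-j)) := by
  apply inv_eq_of_mul_eq_one_right
  rw [Prod.mk_mul_mk, one_mul, r_mul_r, add_neg_cancel, ← DihedralGroup.one_def]
  rfl

def psiPair (p : ℕ) : Mp p →* Np p :=
  { toFun := fun v => (ofAdd (toAdd v).1, r (toAdd v).2.1),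
    map_one' := rfl, map_mul' := fun _ _ => rfl }

def psiRot (p : ℕ) : Mp p →* Np p :=
  { toFun := fun v => (1, r (toAdd v).2.2),
    map_one' := rfl,
    map_mul' := fun v w => by
      show ((1, r (toAdd (v * w)).2.2) : Np p) = (1, r (toAdd v).2.2) * (1, r (toAdd w).2.2)
      rw [Prod.mk_mul_mk, one_mul, r_mul_r]
      rfl }

def psi (p : ℕ) : Mp p →* Equiv.Perm (Np p) where
  toFun v := leftReg (Np p) (psiPair p v) * rReg (Np p) (psiRot p v)
  map_one' := by
    refine Equiv.ext fun x => ?_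
    simp only [map_one, Perm.mul_apply, leftReg_apply, rReg_apply, Perm.one_apply,
      inv_one, one_mul, mul_one]
  map_mul' v w := by
    refine Equiv.ext fun x => ?_
    simp only [map_mul, Perm.mul_apply, leftReg_apply, rReg_apply, mul_inv_rev]
    group

lemma psi_apply (v : Mp p) (x : Np p) :
    psi p v x = psiPair p v * x * (psiRot p v)⁻¹ := (mul_assoc _ _ _).symm

lemma psi_apply' (z i j : ZMod p) (x : Np p) :
    psi p (ofAdd (z, i, j)) x = (ofAdd z, r i) * x * ((1, r (-j)) : Np p) := by
  have h : psi p (ofAdd (z, i, j)) x = (ofAdd z, r i) * x * ((1, r j) : Np p)⁻¹ :=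
    (mul_assoc _ _ _).symm
  rw [h, inv_one_r]

lemma psi_injective (hp : p.Prime) (hodd : Odd p) : Function.Injective (psi p) := by
  haveI := Fact.mk hp
  have h2 : (2 : ZMod p) ≠ 0 := two_ne_zero' hp hodd
  rw [injective_iff_map_eq_one]
  intro v hv
  obtain ⟨⟨z, i, j⟩, rfl⟩ : ∃ t, v = ofAdd t := ⟨toAdd v, rfl⟩
  have h1 : psi p (ofAdd (z, i, j)) 1 = 1 := by rw [hv]; rfl
  rw [psi_apply'] at h1
  rw [mul_one] at h1
  have hz : z = 0 ∧ i = j := by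
    have h1' : ((ofAdd z * 1, r i * r (-j)) : Np p) = (1, 1) := by
      rw [← Prod.mk_mul_mk]; exact h1
    have hfst := congrArg Prod.fst h1'
    have hsnd := congrArg Prod.snd h1'
    simp only [mul_one] at hfst hsnd
    constructor
    · have : toAdd (ofAdd z) = toAdd (1 : Multiplicative (ZMod p)) := congrArg toAdd hfst
      simpa using this
    · rw [r_mul_r, DihedralGroup.one_def, r.injEq] at hsnd
      linear_combination hsnd
  have hx : psi p (ofAdd (z, i, j)) (1, sr 0) = (1, sr 0) := by rw [hv]; rfl
  rw [psi_apply'] at hx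
  have hx' : ((ofAdd z * 1 * 1, r i * sr 0 * r (-j)) : Np p) = (1, sr 0) := by
    rw [← Prod.mk_mul_mk, ← Prod.mk_mul_mk]; exact hx
  have hsnd := congrArg Prod.snd hx'
  simp only [r_mul_sr, sr_mul_r, sr.injEq] at hsnd
  -- hsnd : 0 - i + -j = 0
  have hij : i + j = 0 := by linear_combination -hsnd
  have hj : j = 0 := by
    apply half_zero hp hodd
    linear_combination hij - hz.2
  have hi : i = 0 := hz.2.trans hj
  rw [hz.1, hi, hj]
  rfl


lemma psi_fix_iff (z i j : ZMod p) :
    (∃ x : Np p, psi p (ofAdd (z, i, j)) x = x) ↔ (z = 0 ∧ (i = j ∨ i + j = 0)) := by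
  constructor
  · rintro ⟨⟨w, d⟩, hx⟩
    rw [psi_apply'] at hx
    cases d with
    | r k =>
      have hx' : ((ofAdd z * w * 1, r i * r k * r (-j)) : Np p) = (w, r k) := by
        rw [← Prod.mk_mul_mk, ← Prod.mk_mul_mk]; exact hx
      have hfst := congrArg Prod.fst hx'
      have hsnd := congrArg Prod.snd hx'
      simp only [mul_one, r_mul_r, r.injEq] at hfst hsnd
      constructor
      · have h := congrArg toAdd hfst
        rw [toAdd_mul, toAdd_ofAdd] at h
        linear_combination h
      · left; linear_combination hsnd
    | sr k =>
      have hx' : ((ofAdd z * w * 1, r i * sr k * r (-j)) : Np p) = (w, sr k) := by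
        rw [← Prod.mk_mul_mk, ← Prod.mk_mul_mk]; exact hx
      have hfst := congrArg Prod.fst hx'
      have hsnd := congrArg Prod.snd hx'
      simp only [mul_one, r_mul_sr, sr_mul_r, sr.injEq] at hfst hsnd
      constructor
      · have h := congrArg toAdd hfst
        rw [toAdd_mul, toAdd_ofAdd] at h
        linear_combination h
      · right; linear_combination -hsnd
  · rintro ⟨rfl, hca⟩
    rcases hca with rfl | hij
    · refine ⟨1, ?_⟩
      rw [psi_apply', mul_one, Prod.mk_mul_mk, r_mul_r, add_neg_cancel, mul_one,
        ← DihedralGroup.one_def]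
      rfl
    · refine ⟨(1, sr 0), ?_⟩
      rw [psi_apply', Prod.mk_mul_mk, Prod.mk_mul_mk, r_mul_sr, sr_mul_r, mul_one, mul_one]
      have h1 : (0 : ZMod p) - i + -j = 0 := by linear_combination -hij
      rw [h1]
      rfl

def chi (β γ : ZMod p) : Mp p →* Multiplicative (ZMod p) where
  toFun v := ofAdd (β * (toAdd v).1 + (γ - 1) * (toAdd v).2.1 + γ * (toAdd v).2.2)
  map_one' := by
    have h : β * ((0 : ZMod p × ZMod p × ZMod p)).1 + (γ - 1) * ((0 : ZMod p × ZMod p × ZMod p)).2.1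
        + γ * ((0 : ZMod p × ZMod p × ZMod p)).2.2 = 0 := by
      simp
    show ofAdd _ = 1
    rw [show toAdd (1 : Mp p) = (0 : ZMod p × ZMod p × ZMod p) from rfl, h]
    rfl
  map_mul' v w := by
    show ofAdd _ = ofAdd _ * ofAdd _
    rw [← ofAdd_add]
    congr 1
    simp only [toAdd_mul, Prod.fst_add, Prod.snd_add]
    ring

def Wsub (β γ : ZMod p) : Subgroup (Mp p) := (chi β γ).ker

lemma mem_Wsub {β γ : ZMod p} {v : Mp p} :
    v ∈ Wsub β γ ↔ β * (toAdd v).1 + (γ - 1) * (toAdd v).2.1 + γ * (toAdd v).2.2 = 0 := by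
  rw [Wsub, MonoidHom.mem_ker,
    show (chi β γ) v = ofAdd (β * (toAdd v).1 + (γ - 1) * (toAdd v).2.1 + γ * (toAdd v).2.2)
      from rfl]
  constructor
  · intro h
    have := congrArg toAdd h
    simpa using this
  · intro h
    rw [h]
    rfl

def eW (β γ : ZMod p) : Vp p ≃* Wsub β γ where
  toFun q := ⟨ofAdd ((toAdd q).1, β * (toAdd q).1 + γ * (toAdd q).2,
      (toAdd q).2 - (β * (toAdd q).1 + γ * (toAdd q).2)), by
    rw [mem_Wsub]
    simp only [toAdd_ofAdd]
    ring⟩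
  invFun w := ofAdd ((toAdd (w : Mp p)).1, (toAdd (w : Mp p)).2.1 + (toAdd (w : Mp p)).2.2)
  left_inv q := by
    simp only [toAdd_ofAdd]
    have h2 : β * (toAdd q).1 + γ * (toAdd q).2 +
        ((toAdd q).2 - (β * (toAdd q).1 + γ * (toAdd q).2)) = (toAdd q).2 := by ring
    rw [h2, Prod.mk.eta, ofAdd_toAdd]
  right_inv w := by
    obtain ⟨w, hw⟩ := w
    rw [mem_Wsub] at hw
    apply Subtype.ext
    show ofAdd _ = w
    simp only [toAdd_ofAdd]
    conv_rhs => rw [← ofAdd_toAdd w]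
    congr 1
    refine Prod.ext rfl (Prod.ext ?_ ?_)
    · show β * (toAdd w).1 + γ * ((toAdd w).2.1 + (toAdd w).2.2) = (toAdd w).2.1
      linear_combination hw
    · show (toAdd w).2.1 + (toAdd w).2.2 -
          (β * (toAdd w).1 + γ * ((toAdd w).2.1 + (toAdd w).2.2)) = (toAdd w).2.2
      linear_combination -hw
  map_mul' q q' := by
    apply Subtype.ext
    show ofAdd _ = ofAdd _ * ofAdd _
    rw [← ofAdd_add]
    congr 1
    simp only [toAdd_mul, Prod.fst_add, Prod.snd_add, Prod.mk_add_mk, Prod.mk.injEq]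
    exact ⟨trivial, by ring, by ring⟩

lemma card_Wsub (hp : p.Prime) (β γ : ZMod p) : Nat.card (Wsub β γ) = p ^ 2 := by
  haveI := Fact.mk hp
  rw [← Nat.card_congr (eW β γ).toEquiv]
  rw [Nat.card_congr (MulEquiv.toEquiv (MulEquiv.refl _) : Vp p ≃ Multiplicative (ZMod p × ZMod p))]
  rw [Nat.card_congr Multiplicative.toAdd, Nat.card_prod, Nat.card_zmod, sq]

def Phi (β γ : ZMod p) : Subgroup (Equiv.Perm (Np p)) := (Wsub β γ).map (psi p)

lemma card_Phi (hp : p.Prime) (hodd : Odd p) (β γ : ZMod p) : Nat.card (Phi β γ) = p ^ 2 := by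
  rw [← card_Wsub hp β γ]
  exact (Nat.card_congr (Subgroup.equivMapOfInjective _ _ (psi_injective hp hodd)).toEquiv).symm

lemma psi_mem_hol (v : Mp p) : psi p v ∈ Hol (Np p) := by
  apply mem_hol_of _ (psiPair p v * (psiRot p v)⁻¹) (MulAut.conj (psiRot p v))
  intro x
  rw [psi_apply, MulAut.conj_apply]
  group

lemma Phi_le_hol (β γ : ZMod p) : Phi β γ ≤ Hol (Np p) := by
  rintro g ⟨v, hv, rfl⟩
  exact psi_mem_hol v

lemma Phi_semiregular (hp : p.Prime) (hodd : Odd p) {β γ : ZMod p} (hγ : 2 * γ ≠ 1) :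
    IsSemiregular (Phi β γ) := by
  haveI := Fact.mk hp
  rintro g ⟨v, hv, rfl⟩ hne x hx
  obtain ⟨⟨z, i, j⟩, rfl⟩ : ∃ t, v = ofAdd t := ⟨toAdd v, rfl⟩
  rw [SetLike.mem_coe, mem_Wsub] at hv
  simp only [toAdd_ofAdd] at hv
  have hfix := (psi_fix_iff z i j).mp ⟨x, hx⟩
  obtain ⟨rfl, hca⟩ := hfix
  have hv0 : ofAdd ((0 : ZMod p), i, j) = (1 : Mp p) → False := fun h => hne (by rw [h, map_one])
  rcases hca with rfl | hij
  · have h1 : (2 * γ - 1) * i = 0 := by linear_combination hv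
    have h2γ : 2 * γ - 1 ≠ 0 := fun h => hγ (by linear_combination h)
    have hi : i = 0 := by
      rcases mul_eq_zero.mp h1 with h | h
      · exact absurd h h2γ
      · exact h
    exact hv0 (by rw [hi]; rfl)
  · have hi : i = 0 := by linear_combination γ * hij - hv
    have hj : j = 0 := by linear_combination hij - hi
    exact hv0 (by rw [hi, hj]; rfl)


lemma pow_one_r (a : ZMod p) (n : ℕ) : ((1, r a) : Np p) ^ n = (1, r ((n : ZMod p) * a)) := by
  induction n with
  | zero => rw [pow_zero, Nat.cast_zero, zero_mul]; rfl
  | succ n ih =>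
    rw [pow_succ, ih, Prod.mk_mul_mk, mul_one, r_mul_r]
    have : ((n : ZMod p)) * a + a = ((n + 1 : ℕ) : ZMod p) * a := by push_cast; ring
    rw [this]

lemma rot_of_pow (hp : p.Prime) (hodd : Odd p) (y : Np p) (hy : y ^ p ^ 2 = 1) :
    ∃ w k, y = (w, r k) := by
  rcases y with ⟨w, d⟩
  cases d with
  | r k => exact ⟨w, k, rfl⟩
  | sr k =>
    exfalso
    have h2 : ((w, sr k) : Np p) ^ (p ^ 2) = (w ^ p ^ 2, sr k ^ p ^ 2) := rfl
    rw [h2] at hy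
    have hsnd : (sr k : DihedralGroup p) ^ p ^ 2 = 1 := congrArg Prod.snd hy
    have hdvd : orderOf (sr k : DihedralGroup p) ∣ p ^ 2 := orderOf_dvd_of_pow_eq_one hsnd
    rw [orderOf_sr] at hdvd
    have h2p : 2 ∣ p := Nat.Prime.dvd_of_dvd_pow Nat.prime_two hdvd
    rcases hodd with ⟨t, rfl⟩
    omega

lemma mem_psi_range (hp : p.Prime) (hodd : Odd p) (H : Subgroup (Equiv.Perm (Np p)))
    (hH : H ≤ Hol (Np p)) (hcard : Nat.card H = p ^ 2) {g : Equiv.Perm (Np p)} (hg : g ∈ H) :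
    ∃ v : Mp p, psi p v = g := by
  haveI := Fact.mk hp
  have hpow : g ^ p ^ 2 = 1 := by
    have h1 : (⟨g, hg⟩ : H) ^ Nat.card H = 1 := pow_card_eq_one'
    rw [hcard] at h1
    have h2 := congrArg Subtype.val h1
    simpa using h2
  obtain ⟨n, α, hnα⟩ := hol_decomp g (hH hg)
  have hα : α ^ p ^ 2 = 1 := aut_pow_eq_one g n α hnα _ hpow
  obtain ⟨m, hm⟩ := aut_eq_conj hp hodd α hα
  have hg' : ∀ x, g x = (n * (1, r m)) * x * ((1, r m) : Np p)⁻¹ := by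
    intro x
    rw [hnα, hm]
    group
  have hiter : ∀ (k : ℕ) (x : Np p),
      (g ^ k) x = (n * (1, r m)) ^ k * x * ((((1, r m) : Np p)) ^ k)⁻¹ := by
    intro k
    induction k with
    | zero => intro x; simp
    | succ k ih =>
      intro x
      have h1 : (g ^ (k + 1)) x = (g ^ k) (g x) := by rw [pow_succ]; rfl
      rw [h1, hg' x, ih, pow_succ, pow_succ, mul_inv_rev]
      group
  have ht : (((1, r m) : Np p)) ^ p ^ 2 = 1 := by
    rw [pow_one_r]
    have hcast : ((p ^ 2 : ℕ) : ZMod p) = 0 := by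
      rw [Nat.cast_pow, ZMod.natCast_self, zero_pow (by norm_num : (2 : ℕ) ≠ 0)]
    rw [hcast, zero_mul, ← DihedralGroup.one_def]
    rfl
  have ha : (n * ((1, r m) : Np p)) ^ p ^ 2 = 1 := by
    have h1 := hiter (p ^ 2) 1
    rw [hpow, ht] at h1
    simpa using h1.symm
  obtain ⟨w, k, hwk⟩ := rot_of_pow hp hodd _ ha
  refine ⟨ofAdd (toAdd w, k, m), ?_⟩
  refine Equiv.ext fun x => ?_
  rw [psi_apply', ofAdd_toAdd, hg' x, hwk, inv_one_r]

lemma exists_Phi (hp : p.Prime) (hodd : Odd p) (H : Subgroup (Equiv.Perm (Np p)))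
    (hH : H ≤ Hol (Np p)) (hsr : IsSemiregular H) (hcard : Nat.card H = p ^ 2) :
    ∃ β γ : ZMod p, 2 * γ ≠ 1 ∧ H = Phi β γ := by
  haveI := Fact.mk hp
  have hinj := psi_injective hp hodd
  have hle : H ≤ (psi p).range := by
    intro g hg
    obtain ⟨v, hv⟩ := mem_psi_range hp hodd H hH hcard hg
    exact ⟨v, hv⟩
  set W := H.comap (psi p) with hW
  have hmap : W.map (psi p) = H := Subgroup.map_comap_eq_self hle
  have hcardW : Nat.card W = p ^ 2 := by
    rw [← hcard, ← hmap]
    exact Nat.card_congr (Subgroup.equivMapOfInjective W _ hinj).toEquiv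
  -- the projection q
  let q : W → ZMod p × ZMod p :=
    fun w => ((toAdd ((w : Mp p))).1, (toAdd ((w : Mp p))).2.1 + (toAdd ((w : Mp p))).2.2)
  have hq_def : ∀ w : W,
      q w = ((toAdd ((w : Mp p))).1, (toAdd ((w : Mp p))).2.1 + (toAdd ((w : Mp p))).2.2) :=
    fun _ => rfl
  have hq_mul : ∀ w w' : W, q (w * w') = q w + q w' := by
    intro w w'
    rw [hq_def, hq_def, hq_def, Prod.mk_add_mk]
    have hco : ((w * w' : W) : Mp p) = (w : Mp p) * (w' : Mp p) := rfl
    rw [hco, toAdd_mul]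
    refine Prod.ext rfl ?_
    show ((toAdd (w : Mp p)).2 + (toAdd (w' : Mp p)).2).1 +
        ((toAdd (w : Mp p)).2 + (toAdd (w' : Mp p)).2).2 = _
    rw [Prod.fst_add, Prod.snd_add]
    ring
  have hq_one : q 1 = 0 := by
    rw [hq_def]
    have h1 : ((1 : W) : Mp p) = 1 := rfl
    rw [h1]
    simp
  have hsemi_W : ∀ w : W, ((w : Mp p)) ≠ 1 → ¬(∃ x, psi p (w : Mp p) x = x) := by
    intro w hne hfix
    obtain ⟨x, hx⟩ := hfix
    refine hsr (psi p (w : Mp p)) w.2 ?_ x hx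
    intro h1
    exact hne ((injective_iff_map_eq_one (psi p)).mp hinj _ h1)
  have hq_inj : Function.Injective q := by
    intro w w' h
    have h0 : q w⁻¹ + q w = 0 := by
      rw [add_comm, ← hq_mul, mul_inv_cancel, hq_one]
    have hd0 : q (w⁻¹ * w') = 0 := by
      rw [hq_mul, ← h]
      exact h0
    have hd1 : ((w⁻¹ * w' : W) : Mp p) = 1 := by
      by_contra hne1
      obtain ⟨⟨z, i, j⟩, hrep⟩ : ∃ t, ((w⁻¹ * w' : W) : Mp p) = ofAdd t :=
        ⟨toAdd _, (ofAdd_toAdd _).symm⟩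
      have htoadd : toAdd ((w⁻¹ * w' : W) : Mp p) = (z, i, j) := by rw [hrep]; rfl
      rw [hq_def, htoadd] at hd0
      have hz : z = 0 := congrArg Prod.fst hd0
      have hij : i + j = 0 := congrArg Prod.snd hd0
      have hfix := (psi_fix_iff z i j).mpr ⟨hz, Or.inr hij⟩
      exact hsemi_W (w⁻¹ * w') hne1 (by rw [hrep]; exact hfix)
    have : (w⁻¹ * w' : W) = 1 := by
      apply Subtype.ext
      exact hd1
    exact (inv_mul_eq_one.mp this)
  have hqbij : Function.Bijective q := by
    refine (Nat.bijective_iff_injective_and_card q).mpr ⟨hq_inj, ?_⟩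
    rw [hcardW, Nat.card_prod, Nat.card_zmod, sq]
  let s : ZMod p × ZMod p → W := (Equiv.ofBijective q hqbij).symm
  have hqs : ∀ ab, q (s ab) = ab := fun ab => (Equiv.ofBijective q hqbij).apply_symm_apply ab
  have hsq : ∀ w, s (q w) = w := fun w => (Equiv.ofBijective q hqbij).symm_apply_apply w
  have hs_add : ∀ ab ab', s (ab + ab') = s ab * s ab' := by
    intro ab ab'
    apply hq_inj
    rw [hq_mul, hqs, hqs, hqs]
  let g2 : ZMod p × ZMod p → ZMod p := fun ab => (toAdd ((s ab : Mp p))).2.1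
  have hg2_def : ∀ ab, g2 ab = (toAdd ((s ab : Mp p))).2.1 := fun _ => rfl
  have hg2_add : ∀ ab ab', g2 (ab + ab') = g2 ab + g2 ab' := by
    intro ab ab'
    rw [hg2_def, hg2_def, hg2_def, hs_add]
    have hco : ((s ab * s ab' : W) : Mp p) = (s ab : Mp p) * (s ab' : Mp p) := rfl
    rw [hco, toAdd_mul]
    rfl
  set β : ZMod p := g2 (1, 0) with hβ
  set γ : ZMod p := g2 (0, 1) with hγdef
  have hg2' : ∀ ab : ZMod p × ZMod p, g2 ab = ab.1 * β + ab.2 * γ := by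
    intro ab
    have hsplit : ab = ((ab.1, 0) : ZMod p × ZMod p) + (0, ab.2) := by
      rw [Prod.mk_add_mk, add_zero, zero_add]
    have h1 : ∀ x : ZMod p, g2 (x, 0) = x * β := by
      intro x
      have hadd : ∀ a b : ZMod p, g2 (a + b, 0) = g2 (a, 0) + g2 (b, 0) := by
        intro a b
        rw [← hg2_add]
        congr 1
        rw [Prod.mk_add_mk, add_zero]
      exact addfun_eq (fun x => g2 (x, 0)) hadd x
    have h2 : ∀ x : ZMod p, g2 (0, x) = x * γ := by
      intro x
      have hadd : ∀ a b : ZMod p, g2 (0, a + b) = g2 (0, a) + g2 (0, b) := by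
        intro a b
        rw [← hg2_add]
        congr 1
        rw [Prod.mk_add_mk, add_zero]
      exact addfun_eq (fun x => g2 (0, x)) hadd x
    calc g2 ab = g2 ((ab.1, 0) + (0, ab.2)) := by rw [← hsplit]
      _ = g2 (ab.1, 0) + g2 (0, ab.2) := hg2_add _ _
      _ = ab.1 * β + ab.2 * γ := by rw [h1, h2]
  have hs_coords : ∀ ab : ZMod p × ZMod p,
      (toAdd ((s ab : Mp p))).1 = ab.1 ∧
      (toAdd ((s ab : Mp p))).2.1 + (toAdd ((s ab : Mp p))).2.2 = ab.2 := by
    intro ab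
    have h := hqs ab
    rw [hq_def] at h
    exact ⟨congrArg Prod.fst h, congrArg Prod.snd h⟩
  have hγ : 2 * γ ≠ 1 := by
    intro h2γ
    have hz := (hs_coords (0, 1)).1
    have hij := (hs_coords (0, 1)).2
    have hi : (toAdd ((s (0, 1) : Mp p))).2.1 = γ := rfl
    have hj : (toAdd ((s (0, 1) : Mp p))).2.2 = 1 - γ := by linear_combination hij - hi
    have hw0ne : ((s (0, 1) : Mp p)) ≠ 1 := by
      intro h1
      have h2 : toAdd ((s (0, 1) : Mp p)) = (0 : ZMod p × ZMod p × ZMod p) := by rw [h1]; rfl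
      rw [h2] at hij
      have hij' : (0 : ZMod p) + 0 = 1 := hij
      rw [add_zero] at hij'
      exact one_ne_zero hij'.symm
    obtain ⟨⟨z, i, j⟩, hrep⟩ : ∃ t, ((s (0, 1) : Mp p)) = ofAdd t := ⟨toAdd _, (ofAdd_toAdd _).symm⟩
    have htoadd : toAdd ((s (0, 1) : Mp p)) = (z, i, j) := by rw [hrep]; rfl
    rw [htoadd] at hz hi hj
    have hz' : z = 0 := hz
    have hi' : i = γ := hi
    have hj' : j = 1 - γ := hj
    have hfixp := (psi_fix_iff z i j).mpr
      ⟨hz', Or.inl (by rw [hi', hj']; linear_combination h2γ)⟩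
    exact hsemi_W (s (0, 1)) hw0ne (by rw [hrep]; exact hfixp)
  refine ⟨β, γ, hγ, ?_⟩
  have hWle : W ≤ Wsub β γ := by
    intro w hw
    have hfixw := hsq ⟨w, hw⟩
    rw [mem_Wsub]
    have h1 : g2 (q ⟨w, hw⟩) = (toAdd w).2.1 := by
      rw [hg2_def, hfixw]
    have h2 := hg2' (q ⟨w, hw⟩)
    rw [h1, hq_def] at h2
    -- h2 : (toAdd w).2.1 = (toAdd w).1 * β + ((toAdd w).2.1 + (toAdd w).2.2) * γ
    linear_combination -h2
  have hWeq : W = Wsub β γ := by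
    apply Subgroup.eq_of_le_of_card_ge hWle
    rw [hcardW, card_Wsub hp]
  rw [← hmap, hWeq]
  rfl


lemma Phi_inj (hp : p.Prime) (hodd : Odd p) {β γ β' γ' : ZMod p}
    (h : Phi β γ = Phi β' γ') : β = β' ∧ γ = γ' := by
  have hW : Wsub β γ = Wsub β' γ' := by
    have h2 := congrArg (Subgroup.comap (psi p)) h
    rwa [Phi, Phi, Subgroup.comap_map_eq_self_of_injective (psi_injective hp hodd),
      Subgroup.comap_map_eq_self_of_injective (psi_injective hp hodd)] at h2
  constructor
  · have h1 : ofAdd ((1 : ZMod p), β, -β) ∈ Wsub β γ := by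
      rw [mem_Wsub]
      show β * 1 + (γ - 1) * β + γ * (-β) = 0
      ring
    rw [hW, mem_Wsub] at h1
    have h1' : β' * 1 + (γ' - 1) * β + γ' * (-β) = 0 := h1
    linear_combination -h1'
  · have h1 : ofAdd ((0 : ZMod p), γ, 1 - γ) ∈ Wsub β γ := by
      rw [mem_Wsub]
      show β * 0 + (γ - 1) * γ + γ * (1 - γ) = 0
      ring
    rw [hW, mem_Wsub] at h1
    have h1' : β' * 0 + (γ' - 1) * γ + γ' * (1 - γ) = 0 := h1
    linear_combination -h1'

lemma iso_Phi (hp : p.Prime) (hodd : Odd p) (β γ : ZMod p) :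
    Nonempty ((Phi β γ : Subgroup (Equiv.Perm (Np p))) ≃* Vp p) :=
  ⟨((Subgroup.equivMapOfInjective (Wsub β γ) (psi p) (psi_injective hp hodd)).symm.trans
    (eW β γ).symm : (Phi β γ : Subgroup (Equiv.Perm (Np p))) ≃* Vp p)⟩

lemma card_param (hp : p.Prime) (hodd : Odd p) :
    Nat.card {q : ZMod p × ZMod p // 2 * q.2 ≠ 1} = p ^ 2 - p := by
  haveI := Fact.mk hp
  have h2 : (2 : ZMod p) ≠ 0 := two_ne_zero' hp hodd
  let E : {q : ZMod p × ZMod p // 2 * q.2 ≠ 1} ≃ ZMod p × {y : ZMod p // 2 * y ≠ 1} :=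
    { toFun := fun q => (q.1.1, ⟨q.1.2, q.2⟩),
      invFun := fun x => ⟨(x.1, x.2.1), x.2.2⟩,
      left_inv := fun ⟨⟨a, b⟩, h⟩ => rfl,
      right_inv := fun ⟨a, b, h⟩ => rfl }
  rw [Nat.card_congr E, Nat.card_prod, Nat.card_zmod]
  have hiff : ∀ y : ZMod p, 2 * y ≠ 1 ↔ y ≠ (2 : ZMod p)⁻¹ := by
    intro y
    constructor
    · intro h hy
      exact h (by rw [hy, mul_inv_cancel₀ h2])
    · intro h hy
      apply h
      have := congrArg (fun t => (2 : ZMod p)⁻¹ * t) hy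
      rwa [← mul_assoc, inv_mul_cancel₀ h2, one_mul, mul_one] at this
  rw [Nat.card_congr (Equiv.subtypeEquivRight hiff), Nat.card_eq_fintype_card,
    Fintype.card_subtype_compl, ZMod.card, Fintype.card_subtype_eq]
  rw [Nat.mul_sub, mul_one, ← sq]


end S7

/-- `Hol(C_p × D_{2p})` has exactly `p² - p` semiregular subgroups of order `p²`,
and each of them is isomorphic to `C_p × C_p`. -/
theorem statement7 (p : ℕ) (hp : p.Prime) (hodd : Odd p) :
    Nat.card {H : Subgroup (Equiv.Perm (Multiplicative (ZMod p) × DihedralGroup p)) //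
        H ≤ Hol (Multiplicative (ZMod p) × DihedralGroup p) ∧ IsSemiregular H ∧ Nat.card H = p ^ 2} = p ^ 2 - p ∧
    ∀ H : Subgroup (Equiv.Perm (Multiplicative (ZMod p) × DihedralGroup p)),
      H ≤ Hol (Multiplicative (ZMod p) × DihedralGroup p) → IsSemiregular H → Nat.card H = p ^ 2 →
      Nonempty (H ≃* Vp p) := by
  constructor
  · have hbij : Function.Bijective (fun q : {q : ZMod p × ZMod p // 2 * q.2 ≠ 1} =>
        (⟨S7.Phi q.1.1 q.1.2, S7.Phi_le_hol _ _, S7.Phi_semiregular hp hodd q.2,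
          S7.card_Phi hp hodd _ _⟩ :
          {H : Subgroup (Equiv.Perm (Multiplicative (ZMod p) × DihedralGroup p)) //
            H ≤ Hol (Multiplicative (ZMod p) × DihedralGroup p) ∧ IsSemiregular H ∧
              Nat.card H = p ^ 2})) := by
      constructor
      · rintro ⟨⟨β, γ⟩, hq⟩ ⟨⟨β', γ'⟩, hq'⟩ h
        have h2 : S7.Phi β γ = S7.Phi β' γ' := congrArg Subtype.val h
        obtain ⟨e1, e2⟩ := S7.Phi_inj hp hodd h2
        exact Subtype.ext (Prod.ext e1 e2)
      · rintro ⟨H, hH, hsr', hcard'⟩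
        obtain ⟨β, γ, hγ, hEq⟩ := S7.exists_Phi hp hodd H hH hsr' hcard'
        exact ⟨⟨(β, γ), hγ⟩, Subtype.ext hEq.symm⟩
    rw [← Nat.card_congr (Equiv.ofBijective _ hbij), S7.card_param hp hodd]
  · intro H hH hsr' hcard'
    obtain ⟨β, γ, hγ, rfl⟩ := S7.exists_Phi hp hodd H hH hsr' hcard'
    exact S7.iso_Phi hp hodd β γ
end
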